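/- (Supporting chord theorem) Let C, D be two distinct points of the s-ball V_s and let L(t) = C ⊕_M ((⊖_M C ⊕_M D) ⊙ t), t ∈ ℝ, be the Möbius gyroline through C and D. Then the cogyrotranslation t ↦ C ⊞_M L(t) of the gyroline by C traces the supporting chord of the gyroline: (i) C ⊞_M L(0) = C ⊞_M C = 2 ⊙ C and C ⊞_M L(1) = C ⊞_M D; (ii) for every t ∈ ℝ there exists λ ∈ ℝ with C ⊞_M L(t) = 2 ⊙ C + λ·((C ⊞_M D) − 2 ⊙ C); and (iii) the point 2 ⊙ D also lies on this Euclidean line, i.e., there exists λ' ∈ ℝ with 2 ⊙ D = 2 ⊙ C + λ'·((C ⊞_M D) − 2 ⊙ C). -/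

import Mathlib

open scoped RealInnerProductSpace

noncomputable def gamma {V : Type*} [NormedAddCommGroup V] [InnerProductSpace ℝ V]
    (c : ℝ) (u : V) : ℝ :=
  1 / Real.sqrt (1 - ‖u‖ ^ 2 / c ^ 2)

noncomputable def eAdd {V : Type*} [NormedAddCommGroup V] [InnerProductSpace ℝ V]
    (c : ℝ) (u v : V) : V :=
  (1 / (1 + ⟪u, v⟫ / c ^ 2)) •
    (u + (1 / gamma c u) • v +
      ((1 / c ^ 2) * (gamma c u / (1 + gamma c u)) * ⟪u, v⟫) • u)

noncomputable def eGyr {V : Type*} [NormedAddCommGroup V] [InnerProductSpace ℝ V]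
    (c : ℝ) (u v w : V) : V :=
  eAdd c (-(eAdd c u v)) (eAdd c u (eAdd c v w))

noncomputable def eCoadd {V : Type*} [NormedAddCommGroup V] [InnerProductSpace ℝ V]
    (c : ℝ) (u v : V) : V :=
  eAdd c u (eGyr c u (-v) v)

noncomputable def mAdd {V : Type*} [NormedAddCommGroup V] [InnerProductSpace ℝ V]
    (s : ℝ) (u v : V) : V :=
  (1 / (1 + (2 / s ^ 2) * ⟪u, v⟫ + (1 / s ^ 4) * ‖u‖ ^ 2 * ‖v‖ ^ 2)) •
    ((1 + (2 / s ^ 2) * ⟪u, v⟫ + (1 / s ^ 2) * ‖v‖ ^ 2) • u +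
      (1 - (1 / s ^ 2) * ‖u‖ ^ 2) • v)

noncomputable def mGyr {V : Type*} [NormedAddCommGroup V] [InnerProductSpace ℝ V]
    (s : ℝ) (u v w : V) : V :=
  mAdd s (-(mAdd s u v)) (mAdd s u (mAdd s v w))

noncomputable def mCoadd {V : Type*} [NormedAddCommGroup V] [InnerProductSpace ℝ V]
    (s : ℝ) (u v : V) : V :=
  mAdd s u (mGyr s u (-v) v)

noncomputable def artanh (x : ℝ) : ℝ :=
  (1 / 2) * Real.log ((1 + x) / (1 - x))

open Classical in
noncomputable def sMul {V : Type*} [NormedAddCommGroup V] [InnerProductSpace ℝ V]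
    (c : ℝ) (r : ℝ) (v : V) : V :=
  if v = 0 then 0 else (c * Real.tanh (r * artanh (‖v‖ / c)) / ‖v‖) • v

variable {V : Type*} [NormedAddCommGroup V] [InnerProductSpace ℝ V]

/-! ### tanh facts -/

lemma tanh_eq' (z : ℝ) : Real.tanh z = (Real.exp (2*z) - 1) / (Real.exp (2*z) + 1) := by
  have h0 := Real.exp_pos z
  have h1 : Real.exp z ≠ 0 := h0.ne'
  have h2 : Real.exp (2*z) = Real.exp z * Real.exp z := by rw [two_mul, Real.exp_add]
  have h3 : Real.exp z + (Real.exp z)⁻¹ ≠ 0 := by positivity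
  have h4 : Real.exp z * Real.exp z + 1 ≠ 0 := by positivity
  rw [Real.tanh_eq_sinh_div_cosh, Real.sinh_eq, Real.cosh_eq, Real.exp_neg, h2]
  field_simp

lemma abs_tanh_lt_one' (z : ℝ) : |Real.tanh z| < 1 := by
  have hE := Real.exp_pos (2*z)
  rw [tanh_eq', abs_div, abs_of_pos (show (0:ℝ) < Real.exp (2*z) + 1 by linarith),
    div_lt_one (by linarith), abs_lt]
  constructor <;> linarith

lemma exp_two_artanh' {x : ℝ} (h1 : -1 < x) (h2 : x < 1) :
    Real.exp (2 * artanh x) = (1 + x) / (1 - x) := by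
  have hpos : 0 < (1 + x) / (1 - x) := by apply div_pos <;> linarith
  rw [artanh, show 2 * ((1/2) * Real.log ((1+x)/(1-x))) = Real.log ((1+x)/(1-x)) by ring]
  exact Real.exp_log hpos

lemma tanh_artanh' {x : ℝ} (h1 : -1 < x) (h2 : x < 1) : Real.tanh (artanh x) = x := by
  have hpos : 0 < (1 + x) / (1 - x) := by apply div_pos <;> linarith
  have h1x : (1 - x) ≠ 0 := by linarith
  have hden : (1+x)/(1-x) + 1 ≠ 0 := by positivity
  rw [tanh_eq', exp_two_artanh' h1 h2]
  field_simp
  ring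

lemma tanh_two_artanh' {x : ℝ} (h1 : -1 < x) (h2 : x < 1) :
    Real.tanh (2 * artanh x) = 2*x / (1 + x^2) := by
  have hpos : 0 < (1 + x) / (1 - x) := by apply div_pos <;> linarith
  have hexp : Real.exp (2 * (2 * artanh x)) = ((1 + x) / (1 - x))^2 := by
    rw [show 2 * (2 * artanh x) = 2*artanh x + 2*artanh x by ring, Real.exp_add,
      exp_two_artanh' h1 h2, sq]
  have h1x : (1 - x) ≠ 0 := by linarith
  have h1x2 : 1 + x^2 ≠ 0 := by positivity
  have hden : ((1+x)/(1-x))^2 + 1 ≠ 0 := by positivity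
  rw [tanh_eq', hexp]
  field_simp
  ring

/-! ### sMul facts -/

lemma sMul_zero_coeff (s : ℝ) (v : V) : sMul s 0 v = 0 := by
  rw [sMul]
  split
  · rfl
  · simp [Real.tanh_zero]

lemma norm_div_lt_one {s : ℝ} (hs : 0 < s) {v : V} (hv : ‖v‖ < s) : ‖v‖ / s < 1 :=
  (div_lt_one hs).mpr hv

lemma sMul_one' {s : ℝ} (hs : 0 < s) {v : V} (hv : ‖v‖ < s) : sMul s 1 v = v := by
  rw [sMul]
  split
  · rename_i h; rw [h]
  · rename_i h
    have hv0 : (0:ℝ) < ‖v‖ := norm_pos_iff.mpr h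
    have hnn : (0:ℝ) ≤ ‖v‖/s := by positivity
    rw [one_mul, tanh_artanh' (by linarith) (norm_div_lt_one hs hv)]
    rw [show s * (‖v‖ / s) / ‖v‖ = 1 by field_simp]
    rw [one_smul]

lemma sMul_two' {s : ℝ} (hs : 0 < s) {v : V} (hv : ‖v‖ < s) :
    sMul s 2 v = (2*s^2/(s^2 + ‖v‖^2)) • v := by
  rw [sMul]
  split
  · rename_i h; rw [h, smul_zero]
  · rename_i h
    have hv0 : (0:ℝ) < ‖v‖ := norm_pos_iff.mpr h
    have hs0 : s ≠ 0 := hs.ne'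
    have hnn : (0:ℝ) ≤ ‖v‖/s := by positivity
    rw [tanh_two_artanh' (by linarith) (norm_div_lt_one hs hv)]
    congr 1
    have h1 : 1 + (‖v‖/s)^2 ≠ 0 := by positivity
    have h2 : s^2 + ‖v‖^2 ≠ 0 := by positivity
    field_simp
    skip

lemma norm_sMul_lt {s : ℝ} (hs : 0 < s) (t : ℝ) (v : V) (hv : ‖v‖ < s) :
    ‖sMul s t v‖ < s := by
  rw [sMul]
  split
  · simpa using hs
  · rename_i h
    have hv0 : (0:ℝ) < ‖v‖ := norm_pos_iff.mpr h
    rw [norm_smul, Real.norm_eq_abs, abs_div, abs_mul, abs_of_pos hs, abs_of_pos hv0]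
    rw [div_mul_cancel₀ _ hv0.ne']
    calc s * |Real.tanh (t * artanh (‖v‖ / s))| < s * 1 :=
          (mul_lt_mul_iff_right₀ hs).mpr (abs_tanh_lt_one' _)
      _ = s := mul_one s

lemma sMul_smul_form {s : ℝ} (t : ℝ) {v : V} (hv : v ≠ 0) :
    sMul s t v = (s * Real.tanh (t * artanh (‖v‖ / s)) / ‖v‖) • v := by
  rw [sMul, if_neg hv]

/-! ### basic Möbius facts -/

lemma d_pos (s : ℝ) (hs : 0 < s) (u v : V) (hu : ‖u‖ < s) (hv : ‖v‖ < s) :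
    0 < 1 + (2 / s ^ 2) * ⟪u, v⟫ + (1 / s ^ 4) * ‖u‖ ^ 2 * ‖v‖ ^ 2 := by
  have h2 : -(‖u‖ * ‖v‖) ≤ ⟪u, v⟫ := neg_le_of_abs_le (abs_real_inner_le_norm u v)
  have h3 : ‖u‖ * ‖v‖ < s ^ 2 := by nlinarith [norm_nonneg u, norm_nonneg v]
  have hs2 : (0:ℝ) < s ^ 2 := by positivity
  have h4 : (0:ℝ) < (s ^ 2 - ‖u‖ * ‖v‖) ^ 2 := pow_pos (by linarith) 2
  have h5 : -(‖u‖ * ‖v‖) * s ^ 2 ≤ ⟪u, v⟫ * s ^ 2 := mul_le_mul_of_nonneg_right h2 hs2.le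
  have key : 0 < s ^ 4 + 2 * ⟪u, v⟫ * s ^ 2 + ‖u‖ ^ 2 * ‖v‖ ^ 2 := by nlinarith [h4, h5]
  have : 1 + (2 / s ^ 2) * ⟪u, v⟫ + (1 / s ^ 4) * ‖u‖ ^ 2 * ‖v‖ ^ 2
      = (s ^ 4 + 2 * ⟪u, v⟫ * s ^ 2 + ‖u‖ ^ 2 * ‖v‖ ^ 2) / s ^ 4 := by
    field_simp
  rw [this]; positivity

lemma dp_pos (s : ℝ) (hs : 0 < s) (u v : V) (hu : ‖u‖ < s) (hv : ‖v‖ < s) :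
    0 < s ^ 4 + 2 * ⟪u, v⟫ * s ^ 2 + ‖u‖ ^ 2 * ‖v‖ ^ 2 := by
  have h := d_pos s hs u v hu hv
  have hs0 : s ≠ 0 := hs.ne'
  have e : s ^ 4 + 2 * ⟪u, v⟫ * s ^ 2 + ‖u‖ ^ 2 * ‖v‖ ^ 2
      = s^4 * (1 + (2 / s ^ 2) * ⟪u, v⟫ + (1 / s ^ 4) * ‖u‖ ^ 2 * ‖v‖ ^ 2) := by
    field_simp
  rw [e]; positivity

lemma aux_pos (s : ℝ) (hs : 0 < s) (u y : V) (hu : ‖u‖ < s) (hy : ‖y‖ < s) :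
    0 < s ^ 2 + ‖u‖ ^ 2 + 2 * ⟪u, y⟫ := by
  have h2 : -(‖u‖ * ‖y‖) ≤ ⟪u, y⟫ := neg_le_of_abs_le (abs_real_inner_le_norm u y)
  nlinarith [sq_nonneg (s - ‖u‖), norm_nonneg u, norm_nonneg y]

lemma normsq_mAdd (s : ℝ) (hs : 0 < s) (u v : V) (hu : ‖u‖ < s) (hv : ‖v‖ < s) :
    ‖mAdd s u v‖ ^ 2 = s ^ 2 * (1 - (1 - ‖u‖ ^ 2 / s ^ 2) * (1 - ‖v‖ ^ 2 / s ^ 2) /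
      (1 + (2 / s ^ 2) * ⟪u, v⟫ + (1 / s ^ 4) * ‖u‖ ^ 2 * ‖v‖ ^ 2)) := by
  have hΔ := (d_pos s hs u v hu hv).ne'
  have hs0 : s ≠ 0 := hs.ne'
  rw [← real_inner_self_eq_norm_sq, mAdd]
  set d := 1 + (2 / s ^ 2) * ⟪u, v⟫ + (1 / s ^ 4) * ‖u‖ ^ 2 * ‖v‖ ^ 2 with hd
  simp only [inner_add_left, inner_add_right, real_inner_smul_left, real_inner_smul_right]
  simp only [real_inner_self_eq_norm_sq, real_inner_comm u v]
  field_simp [hΔ]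
  rw [hd]
  field_simp
  ring

lemma norm_mAdd_lt (s : ℝ) (hs : 0 < s) (u v : V) (hu : ‖u‖ < s) (hv : ‖v‖ < s) :
    ‖mAdd s u v‖ < s := by
  have h := normsq_mAdd s hs u v hu hv
  have hΔpos := d_pos s hs u v hu hv
  have hA : ‖u‖ ^ 2 < s ^ 2 := by nlinarith [norm_nonneg u]
  have hB : ‖v‖ ^ 2 < s ^ 2 := by nlinarith [norm_nonneg v]
  have hs2 : (0:ℝ) < s ^ 2 := by positivity
  have hfrac : 0 < (1 - ‖u‖ ^ 2 / s ^ 2) * (1 - ‖v‖ ^ 2 / s ^ 2) /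
      (1 + (2 / s ^ 2) * ⟪u, v⟫ + (1 / s ^ 4) * ‖u‖ ^ 2 * ‖v‖ ^ 2) := by
    apply div_pos _ hΔpos
    apply mul_pos
    · rw [sub_pos, div_lt_one hs2]; exact hA
    · rw [sub_pos, div_lt_one hs2]; exact hB
  have h2 : ‖mAdd s u v‖ ^ 2 < s ^ 2 := by rw [h]; nlinarith [hfrac, hs2]
  exact lt_of_pow_lt_pow_left₀ 2 hs.le h2

lemma normsq_mAdd' (s : ℝ) (hs : 0 < s) (u v : V) (hu : ‖u‖ < s) (hv : ‖v‖ < s) :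
    ‖mAdd s u v‖ ^ 2 = s ^ 2 * ((s ^ 4 + 2 * ⟪u, v⟫ * s ^ 2 + ‖u‖ ^ 2 * ‖v‖ ^ 2)
      - (s ^ 2 - ‖u‖ ^ 2) * (s ^ 2 - ‖v‖ ^ 2)) /
      (s ^ 4 + 2 * ⟪u, v⟫ * s ^ 2 + ‖u‖ ^ 2 * ‖v‖ ^ 2) := by
  have hΔ := (d_pos s hs u v hu hv).ne'
  have hdp0 := (dp_pos s hs u v hu hv).ne'
  have hs0 : s ≠ 0 := hs.ne'
  rw [← real_inner_self_eq_norm_sq, mAdd]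
  set d := 1 + (2 / s ^ 2) * ⟪u, v⟫ + (1 / s ^ 4) * ‖u‖ ^ 2 * ‖v‖ ^ 2 with hd
  set dp := s ^ 4 + 2 * ⟪u, v⟫ * s ^ 2 + ‖u‖ ^ 2 * ‖v‖ ^ 2 with hdp
  simp only [inner_add_left, inner_add_right, real_inner_smul_left, real_inner_smul_right]
  simp only [real_inner_self_eq_norm_sq, real_inner_comm u v]
  field_simp [hΔ, hdp0]
  rw [hd, hdp]
  field_simp
  ring

lemma mAdd_zero_right (s : ℝ) (u : V) : mAdd s u 0 = u := by simp [mAdd]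

lemma mAdd_neg_self (s : ℝ) (v : V) : mAdd s (-v) v = 0 := by
  rw [mAdd]
  simp only [inner_neg_left, norm_neg, real_inner_self_eq_norm_sq]
  match_scalars
  ring

/-! ### closed form for mAdd -/

lemma mAdd_closed (s : ℝ) (hs : 0 < s) (u v : V) (hu : ‖u‖ < s) (hv : ‖v‖ < s) :
    mAdd s u v = ((s^2*(s^2 + 2*⟪u,v⟫ + ‖v‖^2))/(s^4 + 2*⟪u,v⟫*s^2 + ‖u‖^2*‖v‖^2)) • u +
      ((s^2*(s^2 - ‖u‖^2))/(s^4 + 2*⟪u,v⟫*s^2 + ‖u‖^2*‖v‖^2)) • v := by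
  have hs0 : s ≠ 0 := hs.ne'
  set dp := s^4 + 2*⟪u,v⟫*s^2 + ‖u‖^2*‖v‖^2 with hdpdef
  have hdp : dp ≠ 0 := (dp_pos s hs u v hu hv).ne'
  have hco : 1 + (2/s^2) * ⟪u,v⟫ + (1/s^4) * ‖u‖^2 * ‖v‖^2 = dp/s^4 := by
    rw [hdpdef]; field_simp
  rw [mAdd, hco]
  match_scalars <;> field_simp

/-! ### left cancellation -/

lemma left_cancel (s : ℝ) (hs : 0 < s) (u v : V) (hu : ‖u‖ < s) (hv : ‖v‖ < s) :
    mAdd s u (mAdd s (-u) v) = v := by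
  have hs0 : s ≠ 0 := hs.ne'
  have hun : ‖(-u : V)‖ < s := by rwa [norm_neg]
  set e1 : ℝ := s^4 - 2*⟪u,v⟫*s^2 + ‖u‖^2*‖v‖^2 with he1def
  set m : ℝ := s^2 - 2*⟪u,v⟫ + ‖v‖^2 with hmdef
  set bb : ℝ := s^2 - ‖u‖^2 with hbbdef
  have he1pos : 0 < e1 := by
    have h := dp_pos s hs (-u) v hun hv
    rw [inner_neg_left, norm_neg] at h
    have e : e1 = s ^ 4 + 2 * -⟪u,v⟫ * s ^ 2 + ‖u‖ ^ 2 * ‖v‖ ^ 2 := by rw [he1def]; ring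
    rw [e]; exact h
  have he1 : e1 ≠ 0 := he1pos.ne'
  have hco1 : 1 + 2 / s ^ 2 * -⟪u,v⟫ + 1 / s ^ 4 * ‖u‖ ^ 2 * ‖v‖ ^ 2 = e1 / s^4 := by
    rw [he1def]; field_simp; ring
  have hw : mAdd s (-u) v = ((-(s^2*m))/e1) • u + ((s^2*bb)/e1) • v := by
    rw [mAdd, inner_neg_left, norm_neg, hco1]
    match_scalars <;> (field_simp; simp only [hmdef, hbbdef]) <;> ring
  set I : ℝ := bb*⟪u,v⟫ - m*‖u‖^2 with hIdef
  set N : ℝ := m^2*‖u‖^2 - 2*m*bb*⟪u,v⟫ + bb^2*‖v‖^2 with hNdef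
  have hIP : ⟪u, ((-(s^2*m))/e1) • u + ((s^2*bb)/e1) • v⟫ = (s^2*I)/e1 := by
    simp only [inner_add_right, real_inner_smul_right]
    simp only [real_inner_self_eq_norm_sq]
    rw [hIdef]; field_simp; ring
  have hN' : ‖((-(s^2*m))/e1) • u + ((s^2*bb)/e1) • v‖^2 = (s^4*N)/e1^2 := by
    rw [← real_inner_self_eq_norm_sq]
    simp only [inner_add_left, inner_add_right, real_inner_smul_left, real_inner_smul_right]
    simp only [real_inner_self_eq_norm_sq, real_inner_comm u v]
    rw [hNdef]; field_simp; ring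
  set e2 : ℝ := e1^2 + 2*I*e1 + N*‖u‖^2 with he2def
  have hco2 : 1 + 2 / s ^ 2 * ((s^2*I)/e1) + 1 / s ^ 4 * ‖u‖^2 * ((s^4*N)/e1^2)
      = e2 / e1^2 := by
    rw [he2def]; field_simp
  have he1sq : (0:ℝ) < e1^2 := by positivity
  have he2pos : 0 < e2 := by
    have hwlt : ‖mAdd s (-u) v‖ < s := norm_mAdd_lt s hs (-u) v hun hv
    have h := d_pos s hs u (mAdd s (-u) v) hu hwlt
    rw [hw, hIP, hN', hco2] at h
    have : e2 = (e2/e1^2) * e1^2 := by field_simp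
    rw [this]; exact mul_pos h he1sq
  have he2 : e2 ≠ 0 := he2pos.ne'
  rw [hw, mAdd, hIP, hN', hco2]
  match_scalars <;>
    (field_simp; simp only [he2def, hNdef, hIdef, he1def, hmdef, hbbdef]; ring)

/-! ### closed form for coaddition -/

set_option maxHeartbeats 2000000 in
lemma mCoadd_eq (s : ℝ) (hs : 0 < s) (u x : V) (hu : ‖u‖ < s) (hx : ‖x‖ < s) :
    mCoadd s u x = ((s^2*(s^2 - ‖x‖^2))/(s^4 - ‖u‖^2*‖x‖^2)) • u +
      ((s^2*(s^2 - ‖u‖^2))/(s^4 - ‖u‖^2*‖x‖^2)) • x := by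
  have hs0 : s ≠ 0 := hs.ne'
  have hxn : ‖(-x : V)‖ < s := by rwa [norm_neg]
  set cc : ℝ := s^4 - ‖u‖^2*‖x‖^2 with hccdef
  have hccpos : 0 < cc := by
    have hA : ‖u‖ ^ 2 < s ^ 2 := by nlinarith [norm_nonneg u]
    have hB : ‖x‖ ^ 2 < s ^ 2 := by nlinarith [norm_nonneg x]
    have : ‖u‖^2*‖x‖^2 < s^2*s^2 := by nlinarith [sq_nonneg ‖u‖, sq_nonneg ‖x‖]
    rw [hccdef]; nlinarith [this]
  have hcc : cc ≠ 0 := hccpos.ne'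
  set d1 : ℝ := s^4 - 2*⟪u,x⟫*s^2 + ‖u‖^2*‖x‖^2 with hd1def
  set m1 : ℝ := s^2 - 2*⟪u,x⟫ + ‖x‖^2 with hm1def
  set bb : ℝ := s^2 - ‖u‖^2 with hbbdef
  have hd1pos : 0 < d1 := by
    have h := dp_pos s hs u (-x) hu hxn
    rw [inner_neg_right, norm_neg] at h
    have e : d1 = s ^ 4 + 2 * -⟪u,x⟫ * s ^ 2 + ‖u‖ ^ 2 * ‖x‖ ^ 2 := by rw [hd1def]; ring
    rw [e]; exact h
  have hd1 : d1 ≠ 0 := hd1pos.ne'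
  have hco1 : 1 + 2 / s ^ 2 * -⟪u,x⟫ + 1 / s ^ 4 * ‖u‖ ^ 2 * ‖x‖ ^ 2 = d1 / s^4 := by
    rw [hd1def]; field_simp; ring
  have hw : mAdd s u (-x) = ((s^2*m1)/d1) • u + ((-(s^2*bb))/d1) • x := by
    rw [mAdd, inner_neg_right, norm_neg, hco1]
    match_scalars <;> (field_simp; simp only [hm1def, hbbdef]) <;> ring
  have hwn : -(mAdd s u (-x)) = ((-(s^2*m1))/d1) • u + ((s^2*bb)/d1) • x := by
    rw [hw]; module
  set I2 : ℝ := bb*⟪u,x⟫ - m1*‖u‖^2 with hI2def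
  set N2 : ℝ := m1^2*‖u‖^2 - 2*m1*bb*⟪u,x⟫ + bb^2*‖x‖^2 with hN2def
  have hIP2 : ⟪((-(s^2*m1))/d1) • u + ((s^2*bb)/d1) • x, u⟫ = (s^2*I2)/d1 := by
    simp only [inner_add_left, real_inner_smul_left]
    simp only [real_inner_self_eq_norm_sq, real_inner_comm u x]
    rw [hI2def]; field_simp; ring
  have hN2' : ‖((-(s^2*m1))/d1) • u + ((s^2*bb)/d1) • x‖^2 = (s^4*N2)/d1^2 := by
    rw [← real_inner_self_eq_norm_sq]
    simp only [inner_add_left, inner_add_right, real_inner_smul_left, real_inner_smul_right]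
    simp only [real_inner_self_eq_norm_sq, real_inner_comm u x]
    rw [hN2def]; field_simp; ring
  set d2 : ℝ := d1^2 + 2*I2*d1 + N2*‖u‖^2 with hd2def
  have hco2 : 1 + 2 / s ^ 2 * ((s^2*I2)/d1) + 1 / s ^ 4 * ((s^4*N2)/d1^2) * ‖u‖^2
      = d2 / d1^2 := by
    rw [hd2def]; field_simp
  have hd1sq : (0:ℝ) < d1^2 := by positivity
  have hd2pos : 0 < d2 := by
    have hwlt : ‖-(mAdd s u (-x))‖ < s := by
      rw [norm_neg]; exact norm_mAdd_lt s hs u (-x) hu hxn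
    have h := d_pos s hs (-(mAdd s u (-x))) u hwlt hu
    rw [hwn, hIP2, hN2', hco2] at h
    have : d2 = (d2/d1^2) * d1^2 := by field_simp
    rw [this]; exact mul_pos h hd1sq
  have hd2 : d2 ≠ 0 := hd2pos.ne'
  set z1 : ℝ := -(2*‖x‖^2*(s^2 - ⟪u,x⟫)) with hz1def
  have hz : mAdd s (-(mAdd s u (-x))) u = (z1/d1) • u + (cc/d1) • x := by
    rw [hwn, mAdd, hIP2, hN2', hco2]
    match_scalars <;>
      (field_simp; simp only [hz1def, hccdef, hd2def, hN2def, hI2def, hd1def, hm1def, hbbdef];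
       ring)
  set J : ℝ := z1*‖u‖^2 + cc*⟪u,x⟫ with hJdef
  set K : ℝ := z1^2*‖u‖^2 + 2*z1*cc*⟪u,x⟫ + cc^2*‖x‖^2 with hKdef
  have hIP3 : ⟪u, (z1/d1) • u + (cc/d1) • x⟫ = J/d1 := by
    simp only [inner_add_right, real_inner_smul_right]
    simp only [real_inner_self_eq_norm_sq]
    rw [hJdef]; field_simp; try ring
  have hN3 : ‖(z1/d1) • u + (cc/d1) • x‖^2 = K/d1^2 := by
    rw [← real_inner_self_eq_norm_sq]
    simp only [inner_add_left, inner_add_right, real_inner_smul_left, real_inner_smul_right]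
    simp only [real_inner_self_eq_norm_sq, real_inner_comm u x]
    rw [hKdef]; field_simp; ring
  set d3 : ℝ := d1^2*s^4 + 2*J*d1*s^2 + ‖u‖^2*K with hd3def
  have hco3 : 1 + 2 / s ^ 2 * (J/d1) + 1 / s ^ 4 * ‖u‖^2 * (K/d1^2) = d3 / (d1^2*s^4) := by
    rw [hd3def]; field_simp
  have hd3pos : 0 < d3 := by
    have hzlt : ‖mAdd s (-(mAdd s u (-x))) u‖ < s := by
      apply norm_mAdd_lt s hs _ u _ hu
      rw [norm_neg]; exact norm_mAdd_lt s hs u (-x) hu hxn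
    have h := d_pos s hs u (mAdd s (-(mAdd s u (-x))) u) hu hzlt
    rw [hz, hIP3, hN3, hco3] at h
    have hq : (0:ℝ) < d1^2*s^4 := by positivity
    have : d3 = (d3/(d1^2*s^4)) * (d1^2*s^4) := by field_simp
    rw [this]; exact mul_pos h hq
  have hd3 : d3 ≠ 0 := hd3pos.ne'
  rw [mCoadd, mGyr, mAdd_neg_self, mAdd_zero_right, hz, mAdd, hIP3, hN3, hco3]
  match_scalars <;>
    (field_simp; simp only [hd3def, hKdef, hJdef, hz1def, hccdef, hd1def]; ring)

/-! ### the chord form of the cogyrotranslated gyroline -/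

set_option maxHeartbeats 1000000 in
lemma chord_form (s : ℝ) (hs : 0 < s) (u v : V) (hu : ‖u‖ < s) (k : ℝ)
    (hkv : ‖k • v‖ < s) :
    mCoadd s u (mAdd s u (k • v)) =
      ((2*s^2 + 2*(k*⟪u,v⟫))/(s^2 + ‖u‖^2 + 2*(k*⟪u,v⟫))) • u +
      (((s^2 - ‖u‖^2)*k)/(s^2 + ‖u‖^2 + 2*(k*⟪u,v⟫))) • v := by
  have hs0 : s ≠ 0 := hs.ne'
  set Δ : ℝ := s^4 + 2*(k*⟪u,v⟫)*s^2 + ‖u‖^2*(k^2*‖v‖^2) with hΔdef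
  have hΔpos : 0 < Δ := by
    have h := dp_pos s hs u (k•v) hu hkv
    rw [real_inner_smul_right, norm_smul, Real.norm_eq_abs, mul_pow, sq_abs] at h
    rw [hΔdef]; exact h
  have hΔ : Δ ≠ 0 := hΔpos.ne'
  have hxlt : ‖mAdd s u (k•v)‖ < s := norm_mAdd_lt s hs u (k•v) hu hkv
  have hx : mAdd s u (k • v) = ((s^2*(s^2 + 2*(k*⟪u,v⟫) + k^2*‖v‖^2))/Δ) • u +
      ((s^2*(s^2 - ‖u‖^2)*k)/Δ) • v := by
    have h := mAdd_closed s hs u (k•v) hu hkv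
    rw [real_inner_smul_right, norm_smul, Real.norm_eq_abs, mul_pow, sq_abs] at h
    rw [← hΔdef] at h
    rw [h]
    match_scalars <;> (field_simp; try ring)
  have hxn2 : ‖mAdd s u (k•v)‖^2 = s^2*(Δ - (s^2-‖u‖^2)*(s^2-k^2*‖v‖^2))/Δ := by
    have h := normsq_mAdd' s hs u (k•v) hu hkv
    rw [real_inner_smul_right, norm_smul, Real.norm_eq_abs, mul_pow, sq_abs] at h
    rw [← hΔdef] at h
    rw [h]
  have hbbpos : (0:ℝ) < s^2-‖u‖^2 := by nlinarith [norm_nonneg u]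
  have hbb' : s^2-‖u‖^2 ≠ 0 := hbbpos.ne'
  have haux : 0 < s^2 + ‖u‖^2 + 2*(k*⟪u,v⟫) := by
    have h := aux_pos s hs u (k•v) hu hkv
    rw [real_inner_smul_right] at h; exact h
  have haux' : s^2 + ‖u‖^2 + 2*(k*⟪u,v⟫) ≠ 0 := haux.ne'
  have hE : s^4 - ‖u‖^2*‖mAdd s u (k•v)‖^2
      = s^4*(s^2-‖u‖^2)*(s^2 + ‖u‖^2 + 2*(k*⟪u,v⟫))/Δ := by
    rw [hxn2]; field_simp; simp only [hΔdef]; ring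
  have hF : s^2 - ‖mAdd s u (k•v)‖^2 = s^2*(s^2-‖u‖^2)*(s^2-k^2*‖v‖^2)/Δ := by
    rw [hxn2]; field_simp; simp only [hΔdef]; ring
  rw [mCoadd_eq s hs u (mAdd s u (k•v)) hu hxlt, hE, hF, hx]
  match_scalars <;> field_simp <;> (congr 1; ring)

set_option maxHeartbeats 1000000 in
lemma two_smul_mAdd (s : ℝ) (hs : 0 < s) (u v : V) (hu : ‖u‖ < s) (hv : ‖v‖ < s) :
    sMul s 2 (mAdd s u v) =
      ((2*s^2*(s^2 + 2*⟪u,v⟫ + ‖v‖^2))/(s^4 + ‖u‖^2*s^2 + ‖v‖^2*s^2 + 4*⟪u,v⟫*s^2 +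
        ‖u‖^2*‖v‖^2)) • u +
      ((2*s^2*(s^2 - ‖u‖^2))/(s^4 + ‖u‖^2*s^2 + ‖v‖^2*s^2 + 4*⟪u,v⟫*s^2 +
        ‖u‖^2*‖v‖^2)) • v := by
  have hs0 : s ≠ 0 := hs.ne'
  set dp : ℝ := s^4 + 2*⟪u,v⟫*s^2 + ‖u‖^2*‖v‖^2 with hdpdef
  set Sd : ℝ := s^4 + ‖u‖^2*s^2 + ‖v‖^2*s^2 + 4*⟪u,v⟫*s^2 + ‖u‖^2*‖v‖^2 with hSdef
  have hdppos : 0 < dp := by rw [hdpdef]; exact dp_pos s hs u v hu hv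
  have hdp : dp ≠ 0 := hdppos.ne'
  have hkey : (0:ℝ) ≤ ‖u‖^2 + ‖v‖^2 + 2*⟪u,v⟫ := by
    have h0 : (0:ℝ) ≤ ‖u + v‖^2 := sq_nonneg _
    rw [norm_add_sq_real] at h0; linarith
  have hSdpos : 0 < Sd := by
    have e : Sd = dp + s^2*(‖u‖^2 + ‖v‖^2 + 2*⟪u,v⟫) := by rw [hSdef, hdpdef]; ring
    have h2 : (0:ℝ) ≤ s^2*(‖u‖^2 + ‖v‖^2 + 2*⟪u,v⟫) :=
      mul_nonneg (by positivity) hkey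
    rw [e]; linarith
  have hSd : Sd ≠ 0 := hSdpos.ne'
  have hDlt := norm_mAdd_lt s hs u v hu hv
  have hn2 : ‖mAdd s u v‖^2 = s^2*(dp - (s^2-‖u‖^2)*(s^2-‖v‖^2))/dp := by
    have h := normsq_mAdd' s hs u v hu hv
    rw [← hdpdef] at h; exact h
  have hG : s^2 + ‖mAdd s u v‖^2 = s^2*Sd/dp := by
    rw [hn2]; field_simp; simp only [hSdef, hdpdef]; ring
  have hx := mAdd_closed s hs u v hu hv
  rw [← hdpdef] at hx
  rw [sMul_two' hs hDlt, hG, hx]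
  match_scalars <;> (field_simp; try ring)

set_option maxHeartbeats 1000000 in
theorem mobius_supporting_chord (s : ℝ) (hs : 0 < s) (C D : V)
    (hC : ‖C‖ < s) (hD : ‖D‖ < s) (hCD : C ≠ D)
    (L : ℝ → V)
    (hL : ∀ t : ℝ, L t = mAdd s C (sMul s t (mAdd s (-C) D))) :
    mCoadd s C (L 0) = sMul s 2 C ∧
    mCoadd s C (L 1) = mCoadd s C D ∧
    (∀ t : ℝ, ∃ lam : ℝ,
      mCoadd s C (L t) = sMul s 2 C + lam • (mCoadd s C D - sMul s 2 C)) ∧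
    (∃ lam' : ℝ,
      sMul s 2 D = sMul s 2 C + lam' • (mCoadd s C D - sMul s 2 C)) := by
  have hs0 : s ≠ 0 := hs.ne'
  have hCn : ‖(-C : V)‖ < s := by rwa [norm_neg]
  set v : V := mAdd s (-C) D with hvdef
  have hv : ‖v‖ < s := by rw [hvdef]; exact norm_mAdd_lt s hs (-C) D hCn hD
  have hDv : mAdd s C v = D := by rw [hvdef]; exact left_cancel s hs C D hC hD
  have hvne : v ≠ 0 := by
    intro h0
    apply hCD
    rw [h0, mAdd_zero_right] at hDv
    exact hDv
  have h1 : mCoadd s C D =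
      ((2*s^2 + 2*⟪C,v⟫)/(s^2 + ‖C‖^2 + 2*⟪C,v⟫)) • C +
      ((s^2 - ‖C‖^2)/(s^2 + ‖C‖^2 + 2*⟪C,v⟫)) • v := by
    have h := chord_form s hs C v hC 1 (by rw [one_smul]; exact hv)
    rw [one_smul, hDv] at h
    simpa only [one_mul, mul_one] using h
  have h2C : sMul s 2 C = (2*s^2/(s^2+‖C‖^2)) • C := sMul_two' hs hC
  have hGpos : (0:ℝ) < s^2 + ‖C‖^2 := by positivity
  have hG' : s^2 + ‖C‖^2 ≠ 0 := hGpos.ne'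
  have haux1 : 0 < s^2 + ‖C‖^2 + 2*⟪C,v⟫ := aux_pos s hs C v hC hv
  have haux1' : s^2 + ‖C‖^2 + 2*⟪C,v⟫ ≠ 0 := haux1.ne'
  refine ⟨?_, ?_, ?_, ?_⟩
  · rw [hL 0, sMul_zero_coeff, mAdd_zero_right]
    have h := chord_form s hs C v hC 0 (by rw [zero_smul]; simpa using hs)
    rw [zero_smul, mAdd_zero_right] at h
    simp only [zero_mul, mul_zero, add_zero, zero_div, zero_smul] at h
    rw [h, h2C]
  · rw [hL 1, sMul_one' hs hv, hDv]
  · intro t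
    set kk : ℝ := s * Real.tanh (t * artanh (‖v‖ / s)) / ‖v‖ with hkkdef
    have hsm : sMul s t v = kk • v := sMul_smul_form t hvne
    have hkvlt : ‖kk • v‖ < s := by rw [← hsm]; exact norm_sMul_lt hs t v hv
    have h := chord_form s hs C v hC kk hkvlt
    have hauxk : 0 < s^2 + ‖C‖^2 + 2*(kk*⟪C,v⟫) := by
      have h' := aux_pos s hs C (kk•v) hC hkvlt
      rwa [real_inner_smul_right] at h'
    have hauxk' : s^2 + ‖C‖^2 + 2*(kk*⟪C,v⟫) ≠ 0 := hauxk.ne'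
    refine ⟨kk*(s^2+‖C‖^2+2*⟪C,v⟫)/(s^2+‖C‖^2+2*(kk*⟪C,v⟫)), ?_⟩
    rw [hL t, hsm, h, h1, h2C]
    match_scalars <;> field_simp <;>
      (have hd : s ^ 2 + ‖C‖ ^ 2 + 2 * kk * ⟪C, v⟫ ≠ 0 := by
         convert hauxk' using 1; ring
       rw [eq_comm, add_div' _ _ _ hd, div_left_inj' hd]; ring)
  · have h3 := two_smul_mAdd s hs C v hC hv
    rw [hDv] at h3
    have hkey : (0:ℝ) ≤ ‖C‖^2 + ‖v‖^2 + 2*⟪C,v⟫ := by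
      have h0 : (0:ℝ) ≤ ‖C + v‖^2 := sq_nonneg _
      rw [norm_add_sq_real] at h0; linarith
    have hdppos := dp_pos s hs C v hC hv
    have hSdpos : 0 < s^4 + ‖C‖^2*s^2 + ‖v‖^2*s^2 + 4*⟪C,v⟫*s^2 + ‖C‖^2*‖v‖^2 := by
      have h2 : (0:ℝ) ≤ s^2*(‖C‖^2 + ‖v‖^2 + 2*⟪C,v⟫) := mul_nonneg (by positivity) hkey
      nlinarith [hdppos, h2]
    have hSd' : s^4 + ‖C‖^2*s^2 + ‖v‖^2*s^2 + 4*⟪C,v⟫*s^2 + ‖C‖^2*‖v‖^2 ≠ 0 := hSdpos.ne'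
    refine ⟨2*s^2*(s^2+‖C‖^2+2*⟪C,v⟫)/(s^4 + ‖C‖^2*s^2 + ‖v‖^2*s^2 + 4*⟪C,v⟫*s^2 +
      ‖C‖^2*‖v‖^2), ?_⟩
    rw [h3, h1, h2C]
    match_scalars <;> field_simp <;>
      (have hd : s ^ 2 * (s ^ 2 + ‖C‖ ^ 2 + ‖v‖ ^ 2 + ⟪C, v⟫ * 4) + ‖v‖ ^ 2 * ‖C‖ ^ 2 ≠ 0 := by
         convert hSd' using 1; ring
       rw [eq_comm, add_div' _ _ _ hd, div_left_inj' hd]; ring)
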